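/- arXiv:2108.06260 — 2 statements merged into one kernel-verified Lean document; each statement's English description precedes it below -/
import Mathlib

section
/- For every nonnegative integer n and all real x, Bel_{n+1,λ}(x) = x · ∑_{m=0}^{n} C(n,m) · Bel_{m,λ}(x) · (1)_{n-m+1,λ}. -/
open Finset

/-- Degenerate falling factorial `(x)_{n,λ}`. -/
noncomputable def degFall (lam x : ℝ) (n : ℕ) : ℝ := ∏ i ∈ Finset.range n, (x - i * lam)

/-- Degenerate Bell polynomial `Bel_{n,λ}(x) = e^{-x} ∑_{k≥0} (k)_{n,λ} x^k / k!`. -/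
noncomputable def Bel (lam x : ℝ) (n : ℕ) : ℝ :=
  Real.exp (-x) * ∑' k : ℕ, degFall lam (k : ℝ) n * x ^ k / (Nat.factorial k)

private lemma summable_pow_fac : ∀ (m : ℕ) (y : ℝ),
    Summable (fun k : ℕ => (k:ℝ)^m * y^k / k.factorial) := by
  intro m
  induction m using Nat.strong_induction_on with
  | _ m ih =>
    intro y
    match m with
    | 0 => simpa using Real.summable_pow_div_factorial y
    | (m+1) =>
      rw [← summable_nat_add_iff 1]
      have key : (fun k : ℕ => ((k+1 : ℕ):ℝ)^(m+1) * y^(k+1) / (k+1).factorial)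
          = fun k : ℕ => ∑ j ∈ range (m+1),
              (m.choose j : ℝ) * (y * ((k:ℝ)^j * y^k / k.factorial)) := by
        funext k
        have hfac : (((k+1).factorial : ℕ) : ℝ) = ((k:ℝ)+1) * k.factorial := by
          rw [Nat.factorial_succ]; push_cast; ring
        have hne : ((k:ℝ)+1) ≠ 0 := by positivity
        have hfne : ((k.factorial : ℕ) : ℝ) ≠ 0 := by
          exact_mod_cast k.factorial_ne_zero
        have hbin : ((k:ℝ)+1)^m = ∑ j ∈ range (m+1), (k:ℝ)^j * (m.choose j : ℝ) := by
          simpa using (Commute.one_right (k:ℝ)).add_pow m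
        have h1 : ((k+1 : ℕ):ℝ)^(m+1) * y^(k+1) / (k+1).factorial
            = (((k:ℝ)+1)^m) * (y * (y^k / k.factorial)) := by
          push_cast
          rw [hfac]
          field_simp
          ring
        rw [h1, hbin, Finset.sum_mul]
        exact Finset.sum_congr rfl fun j _ => by ring
      rw [key]
      exact summable_sum fun j hj =>
        ((ih j (Nat.lt_succ_of_le (Nat.lt_succ_iff.mp (Finset.mem_range.mp hj))) y).mul_left
          y).mul_left _

private lemma summable_pow_fac' (m : ℕ) (y : ℝ) :
    Summable (fun k : ℕ => ((k:ℝ)+1)^m * y^k / k.factorial) := by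
  have key : (fun k : ℕ => ((k:ℝ)+1)^m * y^k / k.factorial)
      = fun k : ℕ => ∑ j ∈ range (m+1), (m.choose j : ℝ) * ((k:ℝ)^j * y^k / k.factorial) := by
    funext k
    have hbin : ((k:ℝ)+1)^m = ∑ j ∈ range (m+1), (k:ℝ)^j * (m.choose j : ℝ) := by
      simpa using (Commute.one_right (k:ℝ)).add_pow m
    rw [hbin, Finset.sum_mul, Finset.sum_div]
    exact Finset.sum_congr rfl fun j _ => by ring
  rw [key]
  exact summable_sum fun j _ => (summable_pow_fac j y).mul_left _

private lemma summable_degFall (lam c x : ℝ) (m : ℕ) :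
    Summable (fun k : ℕ => degFall lam ((k:ℝ)+c) m * x^k / k.factorial) := by
  set C : ℝ := 1 + |c| + m * |lam| with hCdef
  have hc : (0:ℝ) ≤ |c| := abs_nonneg _
  have hl : (0:ℝ) ≤ (m:ℝ) * |lam| := by positivity
  apply Summable.of_norm_bounded (g := fun k : ℕ => C^m * (((k:ℝ)+1)^m * |x|^k / k.factorial))
    ((summable_pow_fac' m |x|).mul_left _)
  intro k
  have hk : (0:ℝ) ≤ (k:ℝ) := Nat.cast_nonneg k
  have hfk : (0:ℝ) < (k.factorial : ℝ) := by exact_mod_cast k.factorial_pos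
  have h1 : |degFall lam ((k:ℝ)+c) m| ≤ (C * ((k:ℝ)+1))^m := by
    rw [degFall, Finset.abs_prod]
    calc ∏ i ∈ range m, |(k:ℝ)+c - i*lam|
        ≤ ∏ _i ∈ range m, (C * ((k:ℝ)+1)) := by
          apply Finset.prod_le_prod (fun i _ => abs_nonneg _)
          intro i hi
          have him : (i:ℝ) ≤ (m:ℝ) := by
            exact_mod_cast Nat.le_of_lt (Finset.mem_range.mp hi)
          have h2 : |(k:ℝ)+c - i*lam| ≤ (k:ℝ) + |c| + (m:ℝ)*|lam| := by
            calc |(k:ℝ)+c - i*lam| ≤ |(k:ℝ)+c| + |(i:ℝ)*lam| := abs_sub _ _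
              _ ≤ ((k:ℝ) + |c|) + (m:ℝ)*|lam| := by
                  gcongr
                  · calc |(k:ℝ)+c| ≤ |(k:ℝ)| + |c| := abs_add_le _ _
                      _ = (k:ℝ) + |c| := by rw [abs_of_nonneg hk]
                  · rw [abs_mul, abs_of_nonneg (Nat.cast_nonneg i : (0:ℝ) ≤ (i:ℝ))]
                    exact mul_le_mul_of_nonneg_right him (abs_nonneg _)
              _ = (k:ℝ) + |c| + (m:ℝ)*|lam| := by ring
          have h3 : (k:ℝ) + |c| + (m:ℝ)*|lam| ≤ C * ((k:ℝ)+1) := by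
            rw [hCdef]; nlinarith
          linarith
      _ = (C*((k:ℝ)+1))^m := by rw [Finset.prod_const, Finset.card_range]
  have hRHS : C^m * (((k:ℝ)+1)^m * |x|^k / k.factorial)
      = (C*((k:ℝ)+1))^m * |x|^k / k.factorial := by
    rw [mul_pow]; ring
  rw [hRHS, Real.norm_eq_abs, abs_div, abs_mul, abs_pow, abs_of_nonneg hfk.le]
  gcongr

private lemma degFall_succ_left (lam a : ℝ) (n : ℕ) :
    degFall lam a (n+1) = a * degFall lam (a - lam) n := by
  rw [degFall, Finset.prod_range_succ', degFall]
  rw [mul_comm]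
  congr 1
  · simp
  · exact Finset.prod_congr rfl fun i _ => by push_cast; ring

private lemma degFall_add (lam : ℝ) : ∀ (n : ℕ) (a b : ℝ),
    degFall lam (a+b) n
      = ∑ m ∈ range (n+1), (n.choose m : ℝ) * (degFall lam a m * degFall lam b (n-m)) := by
  intro n
  induction n with
  | zero => intro a b; simp [degFall]
  | succ n ih =>
    intro a b
    have hstep : degFall lam (a+b) (n+1) = degFall lam (a+b) n * (a + b - n*lam) := by
      rw [degFall, degFall, Finset.prod_range_succ]
    have hterm : ∀ m ∈ range (n+1),
        (n.choose m : ℝ) * (degFall lam a m * degFall lam b (n-m)) * (a + b - n*lam)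
          = (n.choose m : ℝ) * (degFall lam a (m+1) * degFall lam b (n-m))
            + (n.choose m : ℝ) * (degFall lam a m * degFall lam b (n-m+1)) := by
      intro m hm
      have hmn : m ≤ n := Nat.lt_succ_iff.mp (Finset.mem_range.mp hm)
      have hsplit : a + b - (n:ℝ)*lam
          = (a - m*lam) + (b - ((n-m:ℕ):ℝ)*lam) := by
        rw [Nat.cast_sub hmn]; ring
      have hA : degFall lam a (m+1) = degFall lam a m * (a - m*lam) := by
        rw [degFall, degFall, Finset.prod_range_succ]
      have hB : degFall lam b (n-m+1) = degFall lam b (n-m) * (b - ((n-m:ℕ):ℝ)*lam) := by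
        rw [degFall, degFall, Finset.prod_range_succ]
      rw [hsplit, hA, hB]; ring
    rw [hstep, ih, Finset.sum_mul, Finset.sum_congr rfl hterm, Finset.sum_add_distrib]
    -- now combine the two sums into the (n+2)-range sum
    have hRHS : ∑ m ∈ range (n+1+1),
        ((n+1).choose m : ℝ) * (degFall lam a m * degFall lam b (n+1-m))
        = (∑ m ∈ range (n+1),
            (n.choose m : ℝ) * (degFall lam a (m+1) * degFall lam b (n-m)))
          + (∑ m ∈ range (n+1),
            (n.choose (m+1) : ℝ) * (degFall lam a (m+1) * degFall lam b (n-m))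
            + degFall lam a 0 * degFall lam b (n+1)) := by
      rw [Finset.sum_range_succ' (fun m => ((n+1).choose m : ℝ)
        * (degFall lam a m * degFall lam b (n+1-m))) (n+1)]
      have hcongr : ∀ m ∈ range (n+1),
          ((n+1).choose (m+1) : ℝ) * (degFall lam a (m+1) * degFall lam b (n+1-(m+1)))
          = (n.choose m : ℝ) * (degFall lam a (m+1) * degFall lam b (n-m))
            + (n.choose (m+1) : ℝ) * (degFall lam a (m+1) * degFall lam b (n-m)) := by
        intro m hm
        have h1 : n+1-(m+1) = n-m := Nat.succ_sub_succ n m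
        rw [h1, Nat.choose_succ_succ]
        push_cast
        ring
      rw [Finset.sum_congr rfl hcongr, Finset.sum_add_distrib]
      simp [add_assoc]
    rw [hRHS]
    congr 1
    -- second sums equal
    rw [Finset.sum_range_succ' (fun m => (n.choose m : ℝ)
      * (degFall lam a m * degFall lam b (n-m+1))) n]
    rw [Finset.sum_range_succ (fun m => (n.choose (m+1) : ℝ)
      * (degFall lam a (m+1) * degFall lam b (n-m))) n]
    have hzero : (n.choose (n+1) : ℝ) = 0 := by
      simp [Nat.choose_succ_self]
    rw [hzero]
    have hcongr2 : ∀ m ∈ range n,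
        (n.choose (m+1) : ℝ) * (degFall lam a (m+1) * degFall lam b (n-(m+1)+1))
        = (n.choose (m+1) : ℝ) * (degFall lam a (m+1) * degFall lam b (n-m)) := by
      intro m hm
      have h1 : n-(m+1)+1 = n-m := by
        have hmn : m+1 ≤ n := Finset.mem_range.mp hm
        omega
      rw [h1]
    rw [Finset.sum_congr rfl hcongr2]
    simp [degFall]

/-- `Bel_{n+1,λ}(x) = x ∑_{m=0}^n C(n,m) Bel_{m,λ}(x) (1)_{n-m+1,λ}`. -/
theorem degenerate_bell_recurrence (lam : ℝ) (n : ℕ) (x : ℝ) :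
    Bel lam x (n + 1) =
      x * ∑ m ∈ range (n + 1), (n.choose m : ℝ) * Bel lam x m * degFall lam 1 (n - m + 1) := by
  have hf : Summable (fun k : ℕ => degFall lam (k:ℝ) (n+1) * x^k / k.factorial) := by
    simpa using summable_degFall lam 0 x (n+1)
  have h0 : degFall lam ((0:ℕ):ℝ) (n+1) * x^0 / ((0:ℕ).factorial : ℝ) = 0 := by
    have : degFall lam ((0:ℕ):ℝ) (n+1) = 0 := by
      rw [degFall]
      exact Finset.prod_eq_zero (Finset.mem_range.mpr (Nat.succ_pos n)) (by simp)
    rw [this]; simp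
  have key : (∑' k : ℕ, degFall lam (k:ℝ) (n+1) * x^k / k.factorial)
      = x * ∑' k : ℕ, degFall lam ((k:ℝ) + (1 - lam)) n * x^k / k.factorial := by
    rw [Summable.tsum_eq_zero_add hf, h0, zero_add, ← tsum_mul_left]
    apply tsum_congr
    intro k
    have hfac : (((k+1).factorial : ℕ) : ℝ) = ((k:ℝ)+1) * k.factorial := by
      rw [Nat.factorial_succ]; push_cast; ring
    have hne : ((k:ℝ)+1) ≠ 0 := by positivity
    have hfne : ((k.factorial : ℕ) : ℝ) ≠ 0 := by exact_mod_cast k.factorial_ne_zero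
    have hd : degFall lam ((k+1:ℕ):ℝ) (n+1)
        = ((k:ℝ)+1) * degFall lam ((k:ℝ) + (1 - lam)) n := by
      push_cast
      rw [degFall_succ_left]
      congr 2
      ring
    rw [hd, hfac]
    field_simp
    ring
  have key2 : (∑' k : ℕ, degFall lam ((k:ℝ) + (1-lam)) n * x^k / k.factorial)
      = ∑ m ∈ range (n+1), ((n.choose m : ℝ) * degFall lam (1-lam) (n-m))
          * (∑' k : ℕ, degFall lam (k:ℝ) m * x^k / k.factorial) := by
    have hpt : ∀ k : ℕ, degFall lam ((k:ℝ) + (1-lam)) n * x^k / k.factorial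
        = ∑ m ∈ range (n+1), ((n.choose m : ℝ) * degFall lam (1-lam) (n-m))
            * (degFall lam (k:ℝ) m * x^k / k.factorial) := by
      intro k
      rw [degFall_add lam n (k:ℝ) (1-lam), Finset.sum_mul, Finset.sum_div]
      exact Finset.sum_congr rfl fun m _ => by ring
    rw [tsum_congr hpt, Summable.tsum_finsetSum (fun m _ =>
      ((by simpa using summable_degFall lam 0 x m :
        Summable (fun k : ℕ => degFall lam (k:ℝ) m * x^k / k.factorial)).mul_left _))]
    exact Finset.sum_congr rfl fun m _ => tsum_mul_left
  simp only [Bel]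
  rw [key, key2]
  simp only [Finset.mul_sum]
  refine Finset.sum_congr rfl fun m _ => ?_
  have h1 : degFall lam 1 (n-m+1) = degFall lam (1-lam) (n-m) := by
    rw [degFall_succ_left]; ring
  rw [h1]
  ring
end

section
/- For every integer n ≥ 1 and all real x, x · Bel'_{n,λ}(x) = x · ∑_{m=0}^{n-1} C(n,m) · Bel_{m,λ}(x) · (1)_{n+1−m,λ} + nλ · Bel_{n,λ}(x). -/
open Finset

/-- Ordinary falling factorial `(x)_k`. -/
noncomputable def fall (x : ℝ) (k : ℕ) : ℝ := ∏ i ∈ Finset.range k, (x - i)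

lemma fall_succ (x : ℝ) (k : ℕ) : fall x (k+1) = fall x k * (x - k) := by
  simp [fall, Finset.prod_range_succ]

lemma degFall_succ (lam x : ℝ) (n : ℕ) :
    degFall lam x (n+1) = degFall lam x n * (x - n * lam) := by
  simp [degFall, Finset.prod_range_succ]

lemma fall_nat_lt {j k : ℕ} (h : j < k) : fall (j : ℝ) k = 0 := by
  apply Finset.prod_eq_zero (Finset.mem_range.2 h)
  simp

lemma fall_self_ne (j : ℕ) : fall (j : ℝ) j ≠ 0 := by
  apply Finset.prod_ne_zero_iff.2
  intro i hi
  have : (i : ℝ) < j := by exact_mod_cast Finset.mem_range.1 hi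
  linarith

lemma fall_unique (N : ℕ) (c : ℕ → ℝ)
    (h : ∀ x : ℝ, ∑ k ∈ range N, c k * fall x k = 0) :
    ∀ j, j < N → c j = 0 := by
  intro j
  induction j using Nat.strong_induction_on with
  | _ j ih =>
    intro hj
    have h0 := h (j : ℝ)
    have hsplit : ∑ k ∈ range N, c k * fall (j : ℝ) k = c j * fall (j : ℝ) j := by
      rw [Finset.sum_eq_single j]
      · intro k hk hne
        rcases lt_or_gt_of_ne hne with hlt | hgt
        · rw [ih k hlt (lt_trans hlt hj)]; ring
        · rw [fall_nat_lt hgt]; ring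
      · intro hk; exact absurd (Finset.mem_range.2 hj) hk
    rw [hsplit] at h0
    exact (mul_eq_zero.1 h0).resolve_right (fall_self_ne j)

noncomputable def recR (lam : ℝ) (S2 : ℕ → ℕ → ℝ) (n k : ℕ) : ℝ :=
  (if 1 ≤ k then S2 n (k-1) else 0) + (if k ≤ n then ((k:ℝ) - n*lam) * S2 n k else 0)

lemma S2_rec (lam : ℝ) (S2 : ℕ → ℕ → ℝ)
    (hS2 : ∀ (n : ℕ) (x : ℝ), degFall lam x n = ∑ k ∈ range (n + 1), S2 n k * fall x k)
    (n : ℕ) : ∀ k, k < n + 2 → S2 (n+1) k = recR lam S2 n k := by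
  have key : ∀ x : ℝ, ∑ k ∈ range (n+2), (S2 (n+1) k - recR lam S2 n k) * fall x k = 0 := by
    intro x
    have h1 : degFall lam x (n+1) = degFall lam x n * (x - n * lam) := by
      simp [degFall, Finset.prod_range_succ]
    have h2 : degFall lam x n * (x - n*lam) = ∑ k ∈ range (n+1), S2 n k * fall x k * (x - n*lam) := by
      rw [hS2 n x, Finset.sum_mul]
    have h4 : ∑ k ∈ range (n+1), S2 n k * fall x k * (x - n*lam)
        = (∑ k ∈ range (n+1), S2 n k * fall x (k+1))
          + ∑ k ∈ range (n+1), ((k:ℝ) - n*lam) * S2 n k * fall x k := by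
      rw [← Finset.sum_add_distrib]
      refine Finset.sum_congr rfl (fun k _ => ?_)
      rw [fall_succ]; ring
    have h5 : ∑ k ∈ range (n+2), recR lam S2 n k * fall x k
        = (∑ k ∈ range (n+1), S2 n k * fall x (k+1))
          + ∑ k ∈ range (n+1), ((k:ℝ) - n*lam) * S2 n k * fall x k := by
      have hsplit : ∀ k ∈ range (n+2), recR lam S2 n k * fall x k
          = (if 1 ≤ k then S2 n (k-1) * fall x k else 0)
            + (if k ≤ n then ((k:ℝ) - n*lam) * S2 n k * fall x k else 0) := by
        intro k _
        unfold recR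
        split_ifs <;> ring
      rw [Finset.sum_congr rfl hsplit, Finset.sum_add_distrib]
      congr 1
      · rw [Finset.sum_range_succ']
        simp
      · rw [Finset.sum_range_succ]
        simp only [Nat.add_one_le_iff, lt_irrefl, if_false, add_zero]
        refine Finset.sum_congr rfl (fun k hk => ?_)
        rw [if_pos (Nat.lt_succ_iff.1 (Finset.mem_range.1 hk))]
    have hfin := hS2 (n+1) x
    rw [h1, h2, h4, ← h5] at hfin
    simp only [sub_mul, Finset.sum_sub_distrib]
    rw [show n + 1 + 1 = n + 2 from rfl] at hfin
    rw [← hfin]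
    ring
  intro k hk
  have := fall_unique (n+2) _ key k hk
  linarith

noncomputable def belP (S2 : ℕ → ℕ → ℝ) (n : ℕ) (x : ℝ) : ℝ :=
  ∑ k ∈ range (n+1), S2 n k * x ^ k

lemma hasDerivAt_belP (S2 : ℕ → ℕ → ℝ) (n : ℕ) (x : ℝ) :
    HasDerivAt (belP S2 n) (∑ k ∈ range (n+1), S2 n k * ((k:ℝ) * x ^ (k-1))) x := by
  have : ∀ k ∈ range (n+1), HasDerivAt (fun y : ℝ => S2 n k * y ^ k)
      (S2 n k * ((k:ℝ) * x ^ (k-1))) x := fun k _ => (hasDerivAt_pow k x).const_mul _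
  exact HasDerivAt.fun_sum this

lemma deriv_belP (S2 : ℕ → ℕ → ℝ) (n : ℕ) (x : ℝ) :
    deriv (belP S2 n) x = ∑ k ∈ range (n+1), S2 n k * ((k:ℝ) * x ^ (k-1)) :=
  (hasDerivAt_belP S2 n x).deriv

lemma x_deriv_belP (S2 : ℕ → ℕ → ℝ) (n : ℕ) (x : ℝ) :
    x * deriv (belP S2 n) x = ∑ k ∈ range (n+1), (k:ℝ) * S2 n k * x ^ k := by
  rw [deriv_belP, Finset.mul_sum]
  refine Finset.sum_congr rfl fun k _ => ?_
  cases k with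
  | zero => simp
  | succ m =>
    simp only [Nat.succ_sub_one, pow_succ]
    ring

lemma belRec (lam : ℝ) (S2 : ℕ → ℕ → ℝ)
    (hrec : ∀ n k, k < n + 2 → S2 (n+1) k = recR lam S2 n k) (n : ℕ) (x : ℝ) :
    belP S2 (n+1) x = x * belP S2 n x + x * deriv (belP S2 n) x - n * lam * belP S2 n x := by
  rw [x_deriv_belP]
  have h0 : belP S2 (n+1) x = ∑ k ∈ range (n+2), recR lam S2 n k * x ^ k := by
    unfold belP
    exact Finset.sum_congr rfl fun k hk => by rw [hrec n k (Finset.mem_range.1 hk)]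
  rw [h0]
  have hsplit : ∀ k ∈ range (n+2), recR lam S2 n k * x ^ k
      = (if 1 ≤ k then S2 n (k-1) * x ^ k else 0)
        + (if k ≤ n then ((k:ℝ) - n*lam) * S2 n k * x ^ k else 0) := by
    intro k _
    unfold recR
    split_ifs <;> ring
  rw [Finset.sum_congr rfl hsplit, Finset.sum_add_distrib]
  have h1 : ∑ k ∈ range (n+2), (if 1 ≤ k then S2 n (k-1) * x ^ k else 0)
      = x * belP S2 n x := by
    rw [Finset.sum_range_succ']
    simp only [Nat.le_add_left 1, if_true, Nat.add_sub_cancel, pow_succ]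
    simp [belP, Finset.mul_sum]
    refine Finset.sum_congr rfl fun k _ => by ring
  have h2 : ∑ k ∈ range (n+2), (if k ≤ n then ((k:ℝ) - n*lam) * S2 n k * x ^ k else 0)
      = (∑ k ∈ range (n+1), (k:ℝ) * S2 n k * x ^ k) - n * lam * belP S2 n x := by
    rw [Finset.sum_range_succ]
    simp only [Nat.add_one_le_iff, lt_irrefl, if_false, add_zero]
    have : ∑ k ∈ range (n+1), (if k ≤ n then ((k:ℝ) - n*lam) * S2 n k * x ^ k else 0)
        = ∑ k ∈ range (n+1), ((k:ℝ) - n*lam) * S2 n k * x ^ k := by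
      refine Finset.sum_congr rfl fun k hk => ?_
      rw [if_pos (Nat.lt_succ_iff.1 (Finset.mem_range.1 hk))]
    rw [this]
    unfold belP
    rw [Finset.mul_sum, ← Finset.sum_sub_distrib]
    refine Finset.sum_congr rfl fun k _ => by ring
  rw [h1, h2]
  ring

lemma degFall_one_one (lam : ℝ) : degFall lam 1 1 = 1 := by simp [degFall]

lemma degFall_one_succ (lam : ℝ) (p : ℕ) :
    degFall lam 1 (p+1) = degFall lam 1 p * (1 - p * lam) := by
  simp [degFall, Finset.prod_range_succ]

lemma choose_shift (n m : ℕ) (h1 : 1 ≤ m) (h2 : m ≤ n) :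
    (m:ℝ) * (n.choose m : ℝ) = ((n+1-m : ℕ) : ℝ) * (n.choose (m-1) : ℝ) := by
  obtain ⟨j, rfl⟩ := Nat.exists_eq_add_of_le h1
  have key2 : (j+1) * n.choose (j+1) = (n-j) * n.choose j := by
    rw [mul_comm, Nat.choose_succ_right_eq, mul_comm]
  have h3 : n + 1 - (1 + j) = n - j := by omega
  have h4 : 1 + j - 1 = j := by omega
  rw [h3, h4, show 1 + j = j + 1 by omega]
  exact_mod_cast key2

lemma Qstep (lam : ℝ) (S2 : ℕ → ℕ → ℝ)
    (hrec : ∀ n k, k < n + 2 → S2 (n+1) k = recR lam S2 n k) (n : ℕ)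
    (hC : ∀ y : ℝ, belP S2 (n+1) y
      = y * ∑ m ∈ range (n+1), (n.choose m : ℝ) * belP S2 m y * degFall lam 1 (n+1-m))
    (x : ℝ) :
    deriv (belP S2 (n+1)) x
      = ∑ m ∈ range (n+1), ((n+1).choose m : ℝ) * belP S2 m x * degFall lam 1 (n+1-m) := by
  have hBel : ∀ m : ℕ, HasDerivAt (belP S2 m) (deriv (belP S2 m) x) x := by
    intro m
    have h := hasDerivAt_belP S2 m x
    rwa [← deriv_belP S2 m x] at h
  set c : ℕ → ℝ := fun m => (n.choose m : ℝ) with hc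
  set d : ℕ → ℝ := fun m => degFall lam 1 (n+1-m) with hd
  have hF : HasDerivAt (fun y => ∑ m ∈ range (n+1), c m * belP S2 m y * d m)
      (∑ m ∈ range (n+1), c m * deriv (belP S2 m) x * d m) x :=
    HasDerivAt.fun_sum fun m _ => (((hBel m).const_mul (c m)).mul_const (d m))
  have hid : HasDerivAt (fun y => y * ∑ m ∈ range (n+1), c m * belP S2 m y * d m)
      (1 * (∑ m ∈ range (n+1), c m * belP S2 m x * d m)
        + x * ∑ m ∈ range (n+1), c m * deriv (belP S2 m) x * d m) x :=
    (hasDerivAt_id x).mul hF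
  have hfun : belP S2 (n+1)
      = fun y => y * ∑ m ∈ range (n+1), c m * belP S2 m y * d m := funext hC
  rw [hfun, hid.deriv, one_mul]
  -- replace x * deriv (belP S2 m) x using belRec
  have hxd : ∀ m : ℕ, x * deriv (belP S2 m) x
      = belP S2 (m+1) x - x * belP S2 m x + m * lam * belP S2 m x := by
    intro m
    have := belRec lam S2 hrec m x
    linarith
  have h1 : x * ∑ m ∈ range (n+1), c m * deriv (belP S2 m) x * d m
      = ∑ m ∈ range (n+1),
          (c m * belP S2 (m+1) x * d m + (m:ℝ) * lam * (c m * belP S2 m x * d m))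
        - x * ∑ m ∈ range (n+1), c m * belP S2 m x * d m := by
    rw [Finset.mul_sum, Finset.mul_sum, ← Finset.sum_sub_distrib]
    refine Finset.sum_congr rfl fun m _ => ?_
    have h := hxd m
    have : x * (c m * deriv (belP S2 m) x * d m)
        = c m * (x * deriv (belP S2 m) x) * d m := by ring
    rw [this, h]
    ring
  rw [h1]
  -- x * F x = belP S2 (n+1) x
  have hCx : x * ∑ m ∈ range (n+1), c m * belP S2 m x * d m = belP S2 (n+1) x :=
    (hC x).symm
  rw [hCx]
  -- shift lemma for the B sum
  set h : ℕ → ℝ := fun m =>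
    if 1 ≤ m then (n.choose (m-1) : ℝ) * belP S2 m x * degFall lam 1 (n+2-m) else 0 with hh
  have hB : ∑ m ∈ range (n+1), c m * belP S2 (m+1) x * d m
      = (∑ m ∈ range (n+1), h m) + belP S2 (n+1) x := by
    have e1 : ∑ m ∈ range (n+2), h m = ∑ m ∈ range (n+1), c m * belP S2 (m+1) x * d m := by
      rw [Finset.sum_range_succ']
      have hz : h 0 = 0 := by simp [hh]
      rw [hz, add_zero]
      refine Finset.sum_congr rfl fun m _ => ?_
      simp only [hh, hc, hd]
      rw [if_pos (Nat.le_add_left 1 m)]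
      have : n + 2 - (m + 1) = n + 1 - m := by omega
      simp [this]
    have e2 : ∑ m ∈ range (n+2), h m = ∑ m ∈ range (n+1), h m + h (n+1) :=
      Finset.sum_range_succ h (n+1)
    have hl : h (n+1) = belP S2 (n+1) x := by
      simp only [hh]
      rw [if_pos (Nat.le_add_left 1 n)]
      have e3 : n + 2 - (n+1) = 1 := by omega
      have e4 : n + 1 - 1 = n := by omega
      rw [e3, e4, degFall_one_one, Nat.choose_self]
      push_cast; ring
    rw [← e1, e2, hl]
  rw [Finset.sum_add_distrib, hB]
  have final : ∑ m ∈ range (n+1), (c m * belP S2 m x * d m + (h m + (m:ℝ) * lam * (c m * belP S2 m x * d m)))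
      = ∑ m ∈ range (n+1), ((n+1).choose m : ℝ) * belP S2 m x * degFall lam 1 (n+1-m) := by
    refine Finset.sum_congr rfl fun m hm => ?_
    have hmn : m ≤ n := Nat.lt_succ_iff.1 (Finset.mem_range.1 hm)
    rcases Nat.eq_zero_or_pos m with rfl | hmpos
    · simp [hh, hc, hd]
    · -- m ≥ 1
      have e5 : n + 2 - m = (n + 1 - m) + 1 := by omega
      simp only [hh, hc, hd]
      rw [if_pos (show 1 ≤ m from hmpos), e5, degFall_one_succ]
      have hcast : ((n + 1 - m : ℕ) : ℝ) * lam = ((n:ℝ) + 1 - (m:ℝ)) * lam := by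
        have : ((n + 1 - m : ℕ) : ℝ) = (n:ℝ) + 1 - m := by
          push_cast [Nat.cast_sub (by omega : m ≤ n + 1)]
          ring
        rw [this]
      have hkey : (m:ℝ) * (n.choose m : ℝ) = ((n:ℝ) + 1 - (m:ℝ)) * (n.choose (m-1) : ℝ) := by
        rw [choose_shift n m hmpos hmn] at *
        congr 1
        push_cast [Nat.cast_sub (by omega : m ≤ n + 1)]
        ring
      have hpascal : ((n+1).choose m : ℝ) = (n.choose m : ℝ) + (n.choose (m-1) : ℝ) := by
        obtain ⟨j, rfl⟩ := Nat.exists_eq_add_of_le hmpos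
        have : (n+1).choose (1+j) = n.choose j + n.choose (1+j) := by
          rw [show 1 + j = j + 1 by ring, Nat.choose_succ_succ]
        rw [this]
        have : 1 + j - 1 = j := by omega
        rw [this]
        push_cast; ring
      rw [hpascal]
      have expand : degFall lam 1 (n+1-m) * (1 - ((n + 1 - m : ℕ)) * lam)
          = degFall lam 1 (n+1-m) - degFall lam 1 (n+1-m) * (((n:ℝ)+1-(m:ℝ)) * lam) := by
        rw [hcast]; ring
      rw [expand]
      have : (n.choose (m-1) : ℝ) * belP S2 m x
            * (degFall lam 1 (n+1-m) - degFall lam 1 (n+1-m) * (((n:ℝ)+1-(m:ℝ)) * lam))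
          = (n.choose (m-1):ℝ) * belP S2 m x * degFall lam 1 (n+1-m)
            - (((n:ℝ)+1-(m:ℝ)) * (n.choose (m-1):ℝ)) * lam * belP S2 m x * degFall lam 1 (n+1-m) := by
        ring
      rw [this, ← hkey]
      ring
  rw [Finset.sum_add_distrib, Finset.sum_add_distrib] at final
  linarith [final]

lemma Clem (lam : ℝ) (S2 : ℕ → ℕ → ℝ)
    (hrec : ∀ n k, k < n + 2 → S2 (n+1) k = recR lam S2 n k) :
    ∀ (n : ℕ) (x : ℝ), belP S2 (n+1) x
      = x * ∑ m ∈ range (n+1), (n.choose m : ℝ) * belP S2 m x * degFall lam 1 (n+1-m) := by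
  intro n
  induction n with
  | zero =>
    intro x
    rw [belRec lam S2 hrec 0 x, deriv_belP]
    simp [degFall_one_one]
  | succ p ih =>
    intro x
    have hQ := Qstep lam S2 hrec p ih x
    rw [belRec lam S2 hrec (p+1) x, hQ]
    have hchoose : ∀ m, m ≤ p → ((p+1-m : ℕ):ℝ) * ((p+1).choose m : ℝ)
        = ((p:ℝ)+1) * (p.choose m : ℝ) := by
      intro m hm
      have h1 : (p+1) * p.choose m = (p+1).choose (m+1) * (m+1) := Nat.add_one_mul_choose_eq p m
      have h2 : (p+1).choose (m+1) * (m+1) = (p+1).choose m * (p+1-m) := by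
        rw [Nat.choose_succ_right_eq]
      have h3 : (p+1) * p.choose m = (p+1-m) * (p+1).choose m := by
        rw [h1, h2]; ring
      exact_mod_cast (congrArg (Nat.cast : ℕ → ℝ) h3).symm
    have hR : ∑ m ∈ range (p+2), ((p+1).choose m : ℝ) * belP S2 m x * degFall lam 1 (p+2-m)
        = (∑ m ∈ range (p+1), ((p+1).choose m : ℝ) * belP S2 m x * degFall lam 1 (p+1-m))
          - lam * (((p:ℝ)+1) * ∑ m ∈ range (p+1), (p.choose m : ℝ) * belP S2 m x * degFall lam 1 (p+1-m))
          + belP S2 (p+1) x := by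
      rw [Finset.sum_range_succ]
      have hlast : ((p+1).choose (p+1) : ℝ) * belP S2 (p+1) x * degFall lam 1 (p+2-(p+1))
          = belP S2 (p+1) x := by
        rw [show p+2-(p+1) = 1 by omega, degFall_one_one, Nat.choose_self]
        push_cast; ring
      rw [hlast]
      congr 1
      rw [Finset.mul_sum, Finset.mul_sum, ← Finset.sum_sub_distrib]
      refine Finset.sum_congr rfl fun m hm => ?_
      have hmp : m ≤ p := Nat.lt_succ_iff.1 (Finset.mem_range.1 hm)
      have e1 : p + 2 - m = (p + 1 - m) + 1 := by omega
      rw [e1, degFall_one_succ]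
      have := hchoose m hmp
      have hcm : ((p+1).choose m : ℝ) * belP S2 m x
            * (degFall lam 1 (p+1-m) * (1 - ((p+1-m : ℕ):ℝ) * lam))
          = ((p+1).choose m : ℝ) * belP S2 m x * degFall lam 1 (p+1-m)
            - lam * ((((p+1-m : ℕ):ℝ) * ((p+1).choose m : ℝ)) * belP S2 m x * degFall lam 1 (p+1-m)) := by
        ring
      rw [hcm, this]
      ring
    rw [hR]
    have hdist : x * ((∑ m ∈ range (p+1), ((p+1).choose m : ℝ) * belP S2 m x * degFall lam 1 (p+1-m))
          - lam * (((p:ℝ)+1) * ∑ m ∈ range (p+1), (p.choose m : ℝ) * belP S2 m x * degFall lam 1 (p+1-m))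
          + belP S2 (p+1) x)
        = x * (∑ m ∈ range (p+1), ((p+1).choose m : ℝ) * belP S2 m x * degFall lam 1 (p+1-m))
          - lam * (((p:ℝ)+1)
            * (x * ∑ m ∈ range (p+1), (p.choose m : ℝ) * belP S2 m x * degFall lam 1 (p+1-m)))
          + x * belP S2 (p+1) x := by
      ring
    rw [hdist, ← ih x]
    push_cast
    ring

/-- with `Bel_{n,λ}(x) = ∑_{k=0}^n S_{2,λ}(n,k) x^k`, for `n ≥ 1`,
`x Bel'_{n,λ}(x) = x ∑_{m=0}^{n-1} C(n,m) Bel_{m,λ}(x) (1)_{n+1−m,λ} + nλ Bel_{n,λ}(x)`. -/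
theorem x_deriv_degenerate_bell (lam : ℝ) (S2 : ℕ → ℕ → ℝ)
    (hS2 : ∀ (n : ℕ) (x : ℝ), degFall lam x n = ∑ k ∈ range (n + 1), S2 n k * fall x k)
    (n : ℕ) (hn : 1 ≤ n) (x : ℝ) :
    x * deriv (fun y => ∑ k ∈ range (n + 1), S2 n k * y ^ k) x =
      x * ∑ m ∈ range n, (n.choose m : ℝ) * (∑ k ∈ range (m + 1), S2 m k * x ^ k) *
          degFall lam 1 (n + 1 - m) +
        n * lam * ∑ k ∈ range (n + 1), S2 n k * x ^ k := by
  have hrec : ∀ n k, k < n + 2 → S2 (n+1) k = recR lam S2 n k :=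
    fun m => S2_rec lam S2 hS2 m
  have hR := belRec lam S2 hrec n x
  have hC := Clem lam S2 hrec n x
  show x * deriv (belP S2 n) x
      = x * ∑ m ∈ range n, (n.choose m : ℝ) * belP S2 m x * degFall lam 1 (n + 1 - m)
        + n * lam * belP S2 n x
  rw [Finset.sum_range_succ, show n + 1 - n = 1 by omega, degFall_one_one,
    Nat.choose_self, mul_add] at hC
  push_cast at hC
  simp only [one_mul, mul_one] at hC
  linarith [hR, hC]
end
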